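/- Let S be a symmetric 3×3 real matrix and k ∈ ℝ³. The alternating bilinear map B_{S,k}(u,v) = S(u×v) + k×(u×v) on ℝ³ satisfies the Jacobi identity (i.e., defines a Lie algebra structure on ℝ³) if and only if Sk = 0. In particular, for k = 0 the map (u,v) ↦ S(u×v) is a Lie bracket for every symmetric S. -/

import Mathlib

set_option maxHeartbeats 2000000


lemma mulVec3 (S : Matrix (Fin 3) (Fin 3) ℝ) (x : Fin 3 → ℝ) (i : Fin 3) :
    S.mulVec x i = S i 0 * x 0 + S i 1 * x 1 + S i 2 * x 2 := by
  simp [Matrix.mulVec, dotProduct, Fin.sum_univ_three]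

lemma cross0 (u v : Fin 3 → ℝ) : crossProduct u v 0 = u 1 * v 2 - u 2 * v 1 := by
  simp [cross_apply]
lemma cross1 (u v : Fin 3 → ℝ) : crossProduct u v 1 = u 2 * v 0 - u 0 * v 2 := by
  simp [cross_apply, sub_eq_add_neg, add_comm]
lemma cross2 (u v : Fin 3 → ℝ) : crossProduct u v 2 = u 0 * v 1 - u 1 * v 0 := by
  simp [cross_apply, sub_eq_add_neg, add_comm]

lemma key_jacobi (S : Matrix (Fin 3) (Fin 3) ℝ) (hS : S.IsSymm) (k u v w : Fin 3 → ℝ) :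
    (S.mulVec (crossProduct (S.mulVec (crossProduct u v) + crossProduct k (crossProduct u v)) w)
      + crossProduct k (crossProduct (S.mulVec (crossProduct u v) + crossProduct k (crossProduct u v)) w))
    + (S.mulVec (crossProduct (S.mulVec (crossProduct v w) + crossProduct k (crossProduct v w)) u)
      + crossProduct k (crossProduct (S.mulVec (crossProduct v w) + crossProduct k (crossProduct v w)) u))
    + (S.mulVec (crossProduct (S.mulVec (crossProduct w u) + crossProduct k (crossProduct w u)) v)
      + crossProduct k (crossProduct (S.mulVec (crossProduct w u) + crossProduct k (crossProduct w u)) v))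
    = (-2 * (u 0 * (v 1 * w 2 - v 2 * w 1) - u 1 * (v 0 * w 2 - v 2 * w 0)
        + u 2 * (v 0 * w 1 - v 1 * w 0))) • S.mulVec k := by
  have h10 : S 1 0 = S 0 1 := hS.apply 0 1
  have h20 : S 2 0 = S 0 2 := hS.apply 0 2
  have h21 : S 2 1 = S 1 2 := hS.apply 1 2
  funext i
  fin_cases i <;>
  · simp only [Fin.mk_zero, Fin.mk_one, show (⟨2, by omega⟩ : Fin 3) = 2 from rfl,
      Pi.add_apply, Pi.smul_apply, smul_eq_mul, mulVec3, cross0, cross1, cross2,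
      Pi.add_apply, h10, h20, h21]
    ring




/-- For a symmetric 3×3 real matrix `S` and `k ∈ ℝ³`, the alternating
bilinear map `B(u,v) = S(u×v) + k×(u×v)` satisfies the Jacobi identity if and only if
`Sk = 0`; in particular, for `k = 0` the map `(u,v) ↦ S(u×v)` is a Lie bracket for
every symmetric `S`. -/
theorem linear_poisson_compatible_pair :
    (∀ (S : Matrix (Fin 3) (Fin 3) ℝ), S.IsSymm → ∀ (k : Fin 3 → ℝ)
      (B : (Fin 3 → ℝ) → (Fin 3 → ℝ) → (Fin 3 → ℝ)),
      (∀ u v, B u v = S.mulVec (crossProduct u v) + crossProduct k (crossProduct u v)) →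
      ((∀ u v w, B (B u v) w + B (B v w) u + B (B w u) v = 0) ↔ S.mulVec k = 0)) ∧
    (∀ (S : Matrix (Fin 3) (Fin 3) ℝ), S.IsSymm →
      ∀ u v w : Fin 3 → ℝ,
        S.mulVec (crossProduct (S.mulVec (crossProduct u v)) w) +
        S.mulVec (crossProduct (S.mulVec (crossProduct v w)) u) +
        S.mulVec (crossProduct (S.mulVec (crossProduct w u)) v) = 0) := by
  constructor
  · intro S hS k B hB
    constructor
    · intro hJ
      have h := hJ ![1,0,0] ![0,1,0] ![0,0,1]
      simp only [hB] at h
      rw [key_jacobi S hS] at h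
      norm_num [Matrix.cons_val_zero, Matrix.cons_val_one, Matrix.cons_val_two, Matrix.head_cons] at h
      have h2 : ((-2 : ℝ))⁻¹ • ((-2 : ℝ) • S.mulVec k) = 0 := by rw [h]; simp
      rwa [smul_smul, inv_mul_cancel₀ (by norm_num : (-2:ℝ) ≠ 0), one_smul] at h2
    · intro hSk u v w
      simp only [hB]
      rw [key_jacobi S hS, hSk, smul_zero]
  · intro S hS u v w
    have h := key_jacobi S hS 0 u v w
    simpa using h
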